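/- arXiv:2110.07819 — 3 statements merged into one kernel-verified Lean document; each statement's English description precedes it below -/
import Mathlib

section
/- Let p > 5 be prime and let N ≥ 1 with φ(N) dividing 4p. Then N ∈ {1, 2, 3, 4, 5, 6, 8, 10, 12} ∪ {2p+1, 2(2p+1)} (the latter only when 2p+1 is prime), or N ∈ {4p+1, 2(4p+1)} (the latter only when 4p+1 is prime), or N ∈ {3(2p+1), 4(2p+1), 6(2p+1)} with 2p+1 prime. -/
set_option maxHeartbeats 1600000

theorem stmt_2 (p N : ℕ) (hp : p.Prime) (hp5 : 5 < p) (hN : 1 ≤ N)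
    (hdvd : N.totient ∣ 4 * p) :
    N ∈ ({1, 2, 3, 4, 5, 6, 8, 10, 12} : Set ℕ) ∨
      ((2 * p + 1).Prime ∧
        N ∈ ({2 * p + 1, 2 * (2 * p + 1), 3 * (2 * p + 1), 4 * (2 * p + 1),
          6 * (2 * p + 1)} : Set ℕ)) ∨
      ((4 * p + 1).Prime ∧ N ∈ ({4 * p + 1, 2 * (4 * p + 1)} : Set ℕ)) := by
  have hp0 : 0 < p := by omega
  have hpodd : ¬ (2 ∣ p) := by
    intro h
    have := (Nat.prime_dvd_prime_iff_eq Nat.prime_two hp).mp h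
    omega
  have hN0 : N ≠ 0 := by omega
  have hT1 : Nat.totient 1 = 1 := by decide
  have hT2 : Nat.totient 2 = 1 := by decide
  have hT3 : Nat.totient 3 = 2 := by decide
  have hT4 : Nat.totient 4 = 2 := by decide
  have hT5 : Nat.totient 5 = 4 := by decide
  have hT8 : Nat.totient 8 = 4 := by decide
  -- classification of primes dividing N
  have key : ∀ q : ℕ, q.Prime → q ∣ N → q = 2 ∨ q = 3 ∨ q = 5 ∨ q = 2*p+1 ∨ q = 4*p+1 := by
    intro q hq hqN
    have h1 : q - 1 ∣ 4 * p := by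
      have h := (Nat.totient_dvd_of_dvd hqN).trans hdvd
      rwa [Nat.totient_prime hq] at h
    have hq2 : 2 ≤ q := hq.two_le
    by_cases hpd : p ∣ q - 1
    · obtain ⟨t, ht⟩ := hpd
      have ht4 : t ∣ 4 := by
        have h2 : p * t ∣ p * 4 := by rw [← ht, mul_comm p 4]; exact h1
        exact (Nat.mul_dvd_mul_iff_left hp0).mp h2
      have ht4' : t ≤ 4 := Nat.le_of_dvd (by norm_num) ht4
      interval_cases t
      · omega
      · exfalso
        have h2q : 2 ∣ q := by omega
        have := (Nat.prime_dvd_prime_iff_eq Nat.prime_two hq).mp h2q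
        omega
      · right; right; right; left; omega
      · exact absurd ht4 (by norm_num)
      · right; right; right; right; omega
    · have hcop : Nat.Coprime p (q-1) := (Nat.Prime.coprime_iff_not_dvd hp).mpr hpd
      have h4 : q - 1 ∣ 4 := Nat.Coprime.dvd_of_dvd_mul_right hcop.symm h1
      have hle : q - 1 ≤ 4 := Nat.le_of_dvd (by norm_num) h4
      have hq5 : q ≤ 5 := by omega
      interval_cases q
      · left; rfl
      · right; left; rfl
      · exact absurd hq (by norm_num)
      · right; right; left; rfl
  -- decomposition
  obtain ⟨a, m1, h2m1, hNe⟩ := Nat.exists_eq_pow_mul_and_not_dvd hN0 2 (by norm_num)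
  have hm10 : m1 ≠ 0 := by rintro rfl; simp at hNe; omega
  obtain ⟨b, m2, h3m2, hm1e⟩ := Nat.exists_eq_pow_mul_and_not_dvd hm10 3 (by norm_num)
  have hm20 : m2 ≠ 0 := by rintro rfl; simp at hm1e; omega
  obtain ⟨c, m3, h5m3, hm2e⟩ := Nat.exists_eq_pow_mul_and_not_dvd hm20 5 (by norm_num)
  have hm30 : m3 ≠ 0 := by rintro rfl; simp at hm2e; omega
  obtain ⟨d, m4, hQm4, hm3e⟩ := Nat.exists_eq_pow_mul_and_not_dvd hm30 (2*p+1) (by omega)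
  have hm40 : m4 ≠ 0 := by rintro rfl; simp at hm3e; omega
  obtain ⟨e, m5, hRm5, hm4e⟩ := Nat.exists_eq_pow_mul_and_not_dvd hm40 (4*p+1) (by omega)
  have hm50 : m5 ≠ 0 := by rintro rfl; simp at hm4e; omega
  have hm5m4 : m5 ∣ m4 := by rw [hm4e]; exact dvd_mul_left m5 _
  have hm4m3 : m4 ∣ m3 := by rw [hm3e]; exact dvd_mul_left m4 _
  have hm3m2 : m3 ∣ m2 := by rw [hm2e]; exact dvd_mul_left m3 _
  have hm2m1 : m2 ∣ m1 := by rw [hm1e]; exact dvd_mul_left m2 _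
  have hm1N : m1 ∣ N := by rw [hNe]; exact dvd_mul_left m1 _
  have hm51 : m5 = 1 := by
    by_contra h
    obtain ⟨r, hr, hrm5⟩ := Nat.exists_prime_and_dvd h
    have hrN : r ∣ N := hrm5.trans (hm5m4.trans (hm4m3.trans (hm3m2.trans (hm2m1.trans hm1N))))
    rcases key r hr hrN with h'|h'|h'|h'|h' <;> subst h'
    · exact h2m1 (hrm5.trans (hm5m4.trans (hm4m3.trans (hm3m2.trans hm2m1))))
    · exact h3m2 (hrm5.trans (hm5m4.trans (hm4m3.trans hm3m2)))
    · exact h5m3 (hrm5.trans (hm5m4.trans hm4m3))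
    · exact hQm4 (hrm5.trans hm5m4)
    · exact hRm5 hrm5
  subst hm51
  rw [mul_one] at hm4e
  have hQP : 0 < d → (2*p+1).Prime := by
    intro hd
    by_contra hQ
    have hQdvd : (2*p+1) ∣ m3 := by
      rw [hm3e]; exact Dvd.dvd.mul_right (dvd_pow_self _ (by omega)) _
    obtain ⟨r, hr, hrQ⟩ := Nat.exists_prime_and_dvd (show 2*p+1 ≠ 1 by omega)
    have hrm3 : r ∣ m3 := hrQ.trans hQdvd
    have hrN : r ∣ N := hrm3.trans (hm3m2.trans (hm2m1.trans hm1N))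
    rcases key r hr hrN with h'|h'|h'|h'|h' <;> subst h'
    · exact h2m1 (hrm3.trans (hm3m2.trans hm2m1))
    · exact h3m2 (hrm3.trans hm3m2)
    · exact h5m3 hrm3
    · exact hQ hr
    · have := Nat.le_of_dvd (by omega) hrQ; omega
  have hRP : 0 < e → (4*p+1).Prime := by
    intro he
    by_contra hR
    have hRdvd : (4*p+1) ∣ m4 := by
      rw [hm4e]; exact dvd_pow_self _ (by omega)
    obtain ⟨r, hr, hrR⟩ := Nat.exists_prime_and_dvd (show 4*p+1 ≠ 1 by omega)
    have hrm4 : r ∣ m4 := hrR.trans hRdvd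
    have hrN : r ∣ N := hrm4.trans (hm4m3.trans (hm3m2.trans (hm2m1.trans hm1N)))
    rcases key r hr hrN with h'|h'|h'|h'|h' <;> subst h'
    · exact h2m1 (hrm4.trans (hm4m3.trans (hm3m2.trans hm2m1)))
    · exact h3m2 (hrm4.trans (hm4m3.trans hm3m2))
    · exact h5m3 (hrm4.trans hm4m3)
    · exact hQm4 hrm4
    · exact hR hr
  -- exponent bounds
  have ha : a ≤ 3 := by
    by_contra h
    have h16 : (2:ℕ)^4 ∣ N := by
      rw [hNe]; exact Dvd.dvd.mul_right (pow_dvd_pow 2 (by omega)) _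
    have h6 := (Nat.totient_dvd_of_dvd h16).trans hdvd
    rw [show ((2:ℕ)^4).totient = 8 from by decide] at h6
    omega
  have hb : b ≤ 1 := by
    by_contra h
    have h9 : (3:ℕ)^2 ∣ N := by
      rw [hNe, hm1e]
      exact Dvd.dvd.mul_left (Dvd.dvd.mul_right (pow_dvd_pow 3 (by omega)) _) _
    have h6 := (Nat.totient_dvd_of_dvd h9).trans hdvd
    rw [show ((3:ℕ)^2).totient = 6 from by decide] at h6
    have h3 : (3:ℕ) ∣ 4*p := dvd_trans (by norm_num) h6
    rcases (Nat.Prime.dvd_mul Nat.prime_three).mp h3 with h' | h'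
    · norm_num at h'
    · have := (Nat.prime_dvd_prime_iff_eq Nat.prime_three hp).mp h'; omega
  have hc : c ≤ 1 := by
    by_contra h
    have h25 : (5:ℕ)^2 ∣ N := by
      rw [hNe, hm1e, hm2e]
      exact Dvd.dvd.mul_left (Dvd.dvd.mul_left (Dvd.dvd.mul_right (pow_dvd_pow 5 (by omega)) _) _) _
    have h6 := (Nat.totient_dvd_of_dvd h25).trans hdvd
    rw [show ((5:ℕ)^2).totient = 20 from by decide] at h6
    have h5' : (5:ℕ) ∣ 4*p := dvd_trans (by norm_num) h6
    rcases (Nat.Prime.dvd_mul (by norm_num : Nat.Prime 5)).mp h5' with h' | h'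
    · norm_num at h'
    · have := (Nat.prime_dvd_prime_iff_eq (by norm_num : Nat.Prime 5) hp).mp h'; omega
  have hd : d ≤ 1 := by
    by_contra h
    have hQ := hQP (by omega)
    have hQ2 : (2*p+1)^2 ∣ N := by
      rw [hNe, hm1e, hm2e, hm3e]
      exact Dvd.dvd.mul_left (Dvd.dvd.mul_left (Dvd.dvd.mul_left
        (Dvd.dvd.mul_right (pow_dvd_pow _ (by omega)) _) _) _) _
    have h6 := (Nat.totient_dvd_of_dvd hQ2).trans hdvd
    rw [Nat.totient_prime_pow hQ (by norm_num)] at h6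
    have hle := Nat.le_of_dvd (by omega) h6
    have h1' : (2*p+1)^(2-1) = 2*p+1 := by norm_num
    have h2' : 2*p+1-1 = 2*p := by omega
    rw [h1', h2'] at hle
    nlinarith
  have he : e ≤ 1 := by
    by_contra h
    have hR := hRP (by omega)
    have hR2 : (4*p+1)^2 ∣ N := by
      rw [hNe, hm1e, hm2e, hm3e, hm4e]
      exact Dvd.dvd.mul_left (Dvd.dvd.mul_left (Dvd.dvd.mul_left (Dvd.dvd.mul_left
        (pow_dvd_pow _ (by omega)) _) _) _) _
    have h6 := (Nat.totient_dvd_of_dvd hR2).trans hdvd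
    rw [Nat.totient_prime_pow hR (by norm_num)] at h6
    have hle := Nat.le_of_dvd (by omega) h6
    have h1' : (4*p+1)^(2-1) = 4*p+1 := by norm_num
    have h2' : 4*p+1-1 = 4*p := by omega
    rw [h1', h2'] at hle
    nlinarith
  -- totient formula
  have cop2 : Nat.Coprime (2^a) m1 :=
    Nat.Coprime.pow_left _ ((Nat.prime_two.coprime_iff_not_dvd).mpr h2m1)
  have hφ1 : N.totient = (2^a).totient * m1.totient := by
    rw [hNe, Nat.totient_mul cop2]
  have hφ2 : m1.totient = (3^b).totient * m2.totient := by
    rw [hm1e, Nat.totient_mul (Nat.Coprime.pow_left _ ((Nat.prime_three.coprime_iff_not_dvd).mpr h3m2))]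
  have hφ3 : m2.totient = (5^c).totient * m3.totient := by
    rw [hm2e, Nat.totient_mul (Nat.Coprime.pow_left _ (((by norm_num : Nat.Prime 5).coprime_iff_not_dvd).mpr h5m3))]
  have hφ4 : m3.totient = ((2*p+1)^d).totient * m4.totient := by
    rcases Nat.eq_zero_or_pos d with hd0 | hd0
    · subst hd0; rw [hm3e]; simp
    · rw [hm3e, Nat.totient_mul (Nat.Coprime.pow_left _ (((hQP hd0).coprime_iff_not_dvd).mpr hQm4))]
  have hφ5 : m4.totient = ((4*p+1)^e).totient := by rw [hm4e]
  have hdvd' := hdvd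
  rw [hφ1, hφ2, hφ3, hφ4, hφ5] at hdvd'
  have hNeq : N = 2^a * (3^b * (5^c * ((2*p+1)^d * (4*p+1)^e))) := by
    rw [hNe, hm1e, hm2e, hm3e, hm4e]
  clear hNe hm1e hm2e hm3e hm4e hφ1 hφ2 hφ3 hφ4 hφ5 hm5m4 hm4m3 hm3m2 hm2m1 hm1N
  clear h2m1 h3m2 h5m3 hQm4 hRm5 hm10 hm20 hm30 hm40 hm50 hdvd key
  interval_cases d <;> interval_cases e
  · -- d = 0, e = 0
    simp only [pow_zero, Nat.totient_one, mul_one, one_mul] at hdvd' hNeq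
    interval_cases a <;> interval_cases b <;> interval_cases c <;>
      norm_num [hT1, hT2, hT3, hT4, hT5, hT8] at hdvd' hNeq <;>
      first
        | (left; simp only [Set.mem_insert_iff, Set.mem_singleton_iff]; omega)
        | omega
  · -- d = 0, e = 1
    have hR := hRP one_pos
    simp only [pow_zero, pow_one, Nat.totient_one, one_mul, mul_one] at hdvd' hNeq
    rw [Nat.totient_prime hR, show 4*p+1-1 = 4*p from by omega] at hdvd'
    have heq4 : (((2:ℕ)^a).totient * (((3:ℕ)^b).totient * (((5:ℕ)^c).totient * 4))) * p
        = ((2:ℕ)^a).totient * (((3:ℕ)^b).totient * (((5:ℕ)^c).totient * (4*p))) := by ring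
    have hdvd'' : (((2:ℕ)^a).totient * (((3:ℕ)^b).totient * (((5:ℕ)^c).totient * 4))) * p ∣ 4 * p := by
      rw [heq4]; exact hdvd'
    have hk := (Nat.mul_dvd_mul_iff_right hp0).mp hdvd''
    interval_cases a <;> interval_cases b <;> interval_cases c <;>
      norm_num [hT1, hT2, hT3, hT4, hT5, hT8] at hNeq hk <;>
      (right; right; exact ⟨hR, by simp only [Set.mem_insert_iff, Set.mem_singleton_iff]; omega⟩)
  · -- d = 1, e = 0
    have hQ := hQP one_pos
    simp only [pow_zero, pow_one, Nat.totient_one, one_mul, mul_one] at hdvd' hNeq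
    rw [Nat.totient_prime hQ, show 2*p+1-1 = 2*p from by omega] at hdvd'
    have heq2 : (((2:ℕ)^a).totient * (((3:ℕ)^b).totient * (((5:ℕ)^c).totient * 2))) * p
        = ((2:ℕ)^a).totient * (((3:ℕ)^b).totient * (((5:ℕ)^c).totient * (2*p))) := by ring
    have hdvd'' : (((2:ℕ)^a).totient * (((3:ℕ)^b).totient * (((5:ℕ)^c).totient * 2))) * p ∣ 4 * p := by
      rw [heq2]; exact hdvd'
    have hk := (Nat.mul_dvd_mul_iff_right hp0).mp hdvd''
    interval_cases a <;> interval_cases b <;> interval_cases c <;>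
      norm_num [hT1, hT2, hT3, hT4, hT5, hT8] at hNeq hk <;>
      (right; left; exact ⟨hQ, by simp only [Set.mem_insert_iff, Set.mem_singleton_iff]; omega⟩)
  · -- d = 1, e = 1
    exfalso
    have hQ := hQP one_pos
    have hR := hRP one_pos
    simp only [pow_one] at hdvd'
    rw [Nat.totient_prime hQ, Nat.totient_prime hR,
      show 2*p+1-1 = 2*p from by omega, show 4*p+1-1 = 4*p from by omega] at hdvd'
    have hdd : (2*p)*(4*p) ∣ 4*p :=
      dvd_trans ⟨(2^a).totient * ((3^b).totient * (5^c).totient), by ring⟩ hdvd'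
    have hle := Nat.le_of_dvd (by omega) hdd
    nlinarith
end

section
/- Let p > 5 be prime and N ≥ 1 with φ(N) dividing 6p. Then N can be written as 2^a · q^b with q an odd prime and a ≤ 2. -/
theorem stmt_6 (p N : ℕ) (hp : p.Prime) (hp5 : 5 < p) (hN : 1 ≤ N)
    (hdvd : N.totient ∣ 6 * p) :
    ∃ (a b q : ℕ), q.Prime ∧ Odd q ∧ a ≤ 2 ∧ N = 2 ^ a * q ^ b := by
  have hN0 : N ≠ 0 := by omega
  obtain ⟨k, hk⟩ := hp.odd_of_ne_two (by omega)
  have h4 : ¬ (4 ∣ 6 * p) := by omega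
  set a := N.factorization 2 with ha
  set m := N / 2 ^ a with hm
  have hNm : 2 ^ a * m = N := Nat.ordProj_mul_ordCompl_eq_self N 2
  have hmdvd : m ∣ N := Nat.ordCompl_dvd N 2
  have h2m : ¬ 2 ∣ m := Nat.not_dvd_ordCompl Nat.prime_two hN0
  have hm0 : m ≠ 0 := by
    intro h; rw [h, mul_zero] at hNm; exact hN0 hNm.symm
  have ha2 : a ≤ 2 := by
    by_contra h
    apply h4
    have h8 : (8 : ℕ) ∣ N := by
      calc (8 : ℕ) = 2 ^ 3 := rfl
        _ ∣ 2 ^ a := pow_dvd_pow 2 (by omega)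
        _ ∣ N := Nat.ordProj_dvd N 2
    have : Nat.totient 8 ∣ Nat.totient N := Nat.totient_dvd_of_dvd h8
    have h84 : Nat.totient 8 = 4 := by
      rw [show (8:ℕ) = 2 ^ 3 by norm_num, Nat.totient_prime_pow Nat.prime_two (by norm_num)]
      norm_num
    simpa [h84] using this.trans hdvd
  by_cases hm1 : m = 1
  · exact ⟨a, 0, 3, by norm_num, by decide, ha2, by rw [← hNm, hm1, pow_zero]⟩
  · set q := m.minFac with hq
    have hqp : q.Prime := Nat.minFac_prime hm1
    have hqm : q ∣ m := Nat.minFac_dvd m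
    have hqodd : Odd q := hqp.odd_of_ne_two (by intro h; rw [h] at hqm; exact h2m hqm)
    have huniq : ∀ {d : ℕ}, d.Prime → d ∣ m → d = q := by
      intro d hd hdm
      by_contra hne
      have hdodd : Odd d := hd.odd_of_ne_two (by rintro rfl; exact h2m hdm)
      have hcop : Nat.Coprime d q := (Nat.coprime_primes hd hqp).mpr hne
      have hdq : d * q ∣ m := hcop.mul_dvd_of_dvd_of_dvd hdm hqm
      have htot : Nat.totient (d * q) = (d - 1) * (q - 1) := by
        rw [Nat.totient_mul hcop, Nat.totient_prime hd, Nat.totient_prime hqp]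
      obtain ⟨i, hi⟩ := hdodd
      obtain ⟨j, hj⟩ := hqodd
      have h4' : (4 : ℕ) ∣ (d - 1) * (q - 1) := by
        have : d - 1 = 2 * i := by omega
        have hj' : q - 1 = 2 * j := by omega
        rw [this, hj']
        exact ⟨i * j, by ring⟩
      apply h4
      calc (4 : ℕ) ∣ (d - 1) * (q - 1) := h4'
        _ = Nat.totient (d * q) := htot.symm
        _ ∣ Nat.totient N := Nat.totient_dvd_of_dvd (hdq.trans hmdvd)
        _ ∣ 6 * p := hdvd
    obtain ⟨b, hb⟩ : ∃ b, m = q ^ b :=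
      ⟨_, Nat.eq_prime_pow_of_unique_prime_dvd hm0 huniq⟩
    exact ⟨a, b, q, hqp, hqodd, ha2, by rw [← hNm, hb]⟩
end

section
/- For each even positive integer a, the set of primes p ≤ X such that ap + 1 is also prime has counting function O(X / (log X)^2); consequently, the set of primes p such that none of 2p+1, 4p+1, 6p+1 is prime is infinite. -/
theorem stmt_13
    (hbound : ∀ a ∈ ({2, 4, 6} : Finset ℕ), ∃ C : ℝ, ∀ X : ℕ, 2 ≤ X →
      (((Finset.range (X + 1)).filter
          (fun p => Nat.Prime p ∧ Nat.Prime (a * p + 1))).card : ℝ)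
        ≤ C * X / (Real.log X) ^ 2)
    (hPNT : ∃ c : ℝ, 0 < c ∧ ∃ X0 : ℕ, ∀ X : ℕ, X0 ≤ X →
      c * X / Real.log X ≤ (((Finset.range (X + 1)).filter Nat.Prime).card : ℝ)) :
    {p : ℕ | Nat.Prime p ∧ ¬ Nat.Prime (2 * p + 1) ∧ ¬ Nat.Prime (4 * p + 1) ∧
      ¬ Nat.Prime (6 * p + 1)}.Infinite := by
  by_contra hfin
  rw [Set.not_infinite] at hfin
  set K : ℝ := (hfin.toFinset.card : ℝ) with hK
  have hK0 : 0 ≤ K := by positivity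
  obtain ⟨C2, h2⟩ := hbound 2 (by simp)
  obtain ⟨C4, h4⟩ := hbound 4 (by simp)
  obtain ⟨C6, h6⟩ := hbound 6 (by simp)
  obtain ⟨c, hc, X0, hX0⟩ := hPNT
  set C : ℝ := C2 + C4 + C6 with hC
  -- counting inequality
  have hcount : ∀ X : ℕ, 2 ≤ X → X0 ≤ X →
      c * X / Real.log X ≤ K + C * X / (Real.log X) ^ 2 := by
    intro X hX2 hXX0
    have hsub : (Finset.range (X + 1)).filter Nat.Prime ⊆
        hfin.toFinset ∪
        ((Finset.range (X + 1)).filter (fun p => Nat.Prime p ∧ Nat.Prime (2 * p + 1))) ∪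
        ((Finset.range (X + 1)).filter (fun p => Nat.Prime p ∧ Nat.Prime (4 * p + 1))) ∪
        ((Finset.range (X + 1)).filter (fun p => Nat.Prime p ∧ Nat.Prime (6 * p + 1))) := by
      intro p hp
      simp only [Finset.mem_filter, Finset.mem_range] at hp
      simp only [Finset.mem_union, Finset.mem_filter, Finset.mem_range,
        Set.Finite.mem_toFinset, Set.mem_setOf_eq]
      by_cases hp2 : Nat.Prime (2 * p + 1)
      · tauto
      by_cases hp4 : Nat.Prime (4 * p + 1)
      · tauto
      by_cases hp6 : Nat.Prime (6 * p + 1)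
      · tauto
      · tauto
    have hcard : (((Finset.range (X + 1)).filter Nat.Prime).card : ℝ) ≤
        K + ((((Finset.range (X + 1)).filter (fun p => Nat.Prime p ∧ Nat.Prime (2 * p + 1))).card : ℝ)
          + (((Finset.range (X + 1)).filter (fun p => Nat.Prime p ∧ Nat.Prime (4 * p + 1))).card : ℝ)
          + (((Finset.range (X + 1)).filter (fun p => Nat.Prime p ∧ Nat.Prime (6 * p + 1))).card : ℝ)) := by
      have := Finset.card_le_card hsub
      have hle := this.trans (Finset.card_union_le _ _)
      have hle2 := hle.trans (Nat.add_le_add_right (Finset.card_union_le _ _) _)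
      have hle3 := hle2.trans (Nat.add_le_add_right (Nat.add_le_add_right (Finset.card_union_le _ _) _) _)
      calc (((Finset.range (X + 1)).filter Nat.Prime).card : ℝ) ≤
          ((hfin.toFinset.card + _ + _ + _ : ℕ) : ℝ) := by exact_mod_cast hle3
        _ = _ := by push_cast; ring
    have := (hX0 X hXX0).trans hcard
    refine this.trans ?_
    have e2 := h2 X hX2
    have e4 := h4 X hX2
    have e6 := h6 X hX2
    have : C * X / (Real.log X) ^ 2 =
        C2 * X / (Real.log X) ^ 2 + C4 * X / (Real.log X) ^ 2 + C6 * X / (Real.log X) ^ 2 := by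
      rw [hC]; ring
    rw [this]
    linarith
  -- divide through
  have hdiv : ∀ X : ℕ, max 2 X0 ≤ X → c ≤ K * Real.log X / X + C / Real.log X := by
    intro X hX
    have hX2 : 2 ≤ X := le_trans (le_max_left _ _) hX
    have hXpos : (0:ℝ) < X := by exact_mod_cast Nat.lt_of_lt_of_le (by norm_num) hX2
    have hLpos : 0 < Real.log X := Real.log_pos (by exact_mod_cast hX2)
    have hfrac : (0:ℝ) < (X:ℝ) / Real.log X := div_pos hXpos hLpos
    have key := hcount X hX2 (le_trans (le_max_right _ _) hX)
    rw [← mul_le_mul_iff_of_pos_right hfrac]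
    have hl : c * ((X:ℝ) / Real.log X) = c * X / Real.log X := by ring
    have hr : (K * Real.log X / X + C / Real.log X) * ((X:ℝ) / Real.log X)
        = K + C * X / (Real.log X) ^ 2 := by
      field_simp
    rw [hl, hr]
    exact key
  -- tendsto to 0
  have t1 : Filter.Tendsto (fun X : ℕ => K * Real.log X / X) Filter.atTop (nhds 0) := by
    have hlog : Filter.Tendsto (fun x : ℝ => Real.log x / x) Filter.atTop (nhds 0) :=
      Real.isLittleO_log_id_atTop.tendsto_div_nhds_zero
    have := (hlog.comp (tendsto_natCast_atTop_atTop (R := ℝ))).const_mul K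
    simpa [Function.comp, mul_div_assoc] using this
  have t2 : Filter.Tendsto (fun X : ℕ => C / Real.log X) Filter.atTop (nhds 0) := by
    have hlog : Filter.Tendsto (fun x : ℝ => (Real.log x)⁻¹) Filter.atTop (nhds 0) :=
      Real.tendsto_log_atTop.inv_tendsto_atTop
    have := (hlog.comp (tendsto_natCast_atTop_atTop (R := ℝ))).const_mul C
    simpa [Function.comp, div_eq_mul_inv] using this
  have tsum : Filter.Tendsto (fun X : ℕ => K * Real.log X / X + C / Real.log X)
      Filter.atTop (nhds 0) := by simpa using t1.add t2
  have hev : ∀ᶠ X : ℕ in Filter.atTop, c ≤ K * Real.log X / X + C / Real.log X :=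
    Filter.eventually_atTop.2 ⟨max 2 X0, hdiv⟩
  have : c ≤ 0 := ge_of_tendsto tsum hev
  linarith
end
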